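/- Let G be a topological group equipped with dilations δ as in the context. Then every nonempty subsemigroup S ⊆ G satisfying δ_t(S) = S for all t > 0 (a conical semigroup) is contractible as a topological space (with the subspace topology). -/

import Mathlib

/-- In a topological group `G` equipped with a family of dilations `δ`, every nonempty
subsemigroup `S` with `δ_t (S) = S` for all `t > 0` (a conical semigroup) is
contractible as a topological space. -/
theorem conical_semigroup_contractible
    {G : Type*} [Group G] [TopologicalSpace G] [IsTopologicalGroup G]
    (δ : ℝ → G → G)
    (hhom : ∀ t : ℝ, 0 ≤ t → ∀ x y : G, δ t (x * y) = δ t x * δ t y)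
    (hone : ∀ x : G, δ 1 x = x)
    (hcomp : ∀ s t : ℝ, 0 ≤ s → 0 ≤ t → ∀ x : G, δ s (δ t x) = δ (s * t) x)
    (hzero : ∀ x : G, δ 0 x = 1)
    (hcont : ContinuousOn (fun p : ℝ × G => δ p.1 p.2) (Set.Ici 0 ×ˢ Set.univ))
    (S : Set G) (hne : S.Nonempty)
    (hmul : ∀ x ∈ S, ∀ y ∈ S, x * y ∈ S)
    (hcone : ∀ t : ℝ, 0 < t → δ t '' S = S) :
    ContractibleSpace ↥S := by
  obtain ⟨x0, hx0⟩ := hne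
  rw [contractible_iff_id_nullhomotopic]
  refine ⟨⟨x0, hx0⟩, ?_⟩
  have mem : ∀ t : ℝ, 0 < t → ∀ x ∈ S, δ t x ∈ S := by
    intro t ht x hx
    rw [← hcone t ht]
    exact ⟨x, hx, rfl⟩
  have hmemH : ∀ (t : unitInterval) (x : ↥S), δ (1 - (t : ℝ)) (x : G) * δ (t : ℝ) x0 ∈ S := by
    intro t x
    rcases eq_or_lt_of_le t.2.1 with h0 | h0
    · have : (t : ℝ) = 0 := h0.symm
      rw [this]
      simp only [sub_zero, hone, hzero, mul_one]
      exact x.2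
    rcases eq_or_lt_of_le t.2.2 with h1 | h1
    · rw [h1]
      simp only [sub_self, hone, hzero, one_mul]
      exact hx0
    · exact hmul _ (mem _ (by linarith) _ x.2) _ (mem _ h0 _ hx0)
  have c1 : Continuous fun p : unitInterval × ↥S => δ (1 - (p.1 : ℝ)) (p.2 : G) := by
    have : Continuous fun p : unitInterval × ↥S => ((1 - (p.1 : ℝ), (p.2 : G)) : ℝ × G) := by
      fun_prop
    refine hcont.comp_continuous this ?_
    intro p
    exact ⟨by simp [sub_nonneg, p.1.2.2], trivial⟩
  have c2 : Continuous fun p : unitInterval × ↥S => δ (p.1 : ℝ) x0 := by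
    have : Continuous fun p : unitInterval × ↥S => (((p.1 : ℝ), x0) : ℝ × G) := by fun_prop
    refine hcont.comp_continuous this ?_
    intro p
    exact ⟨p.1.2.1, trivial⟩
  have H : ContinuousMap.Homotopy (ContinuousMap.id ↥S)
      (ContinuousMap.const ↥S ⟨x0, hx0⟩) :=
    { toFun := fun p => ⟨δ (1 - (p.1 : ℝ)) (p.2 : G) * δ (p.1 : ℝ) x0, hmemH p.1 p.2⟩
      continuous_toFun := by
        apply Continuous.subtype_mk
        exact c1.mul c2
      map_zero_left := by
        intro x
        apply Subtype.ext
        simp [hone, hzero]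
      map_one_left := by
        intro x
        apply Subtype.ext
        simp [hone, hzero] }
  exact ⟨H⟩
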